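/- Let T be a bounded invertible operator with spectrum in ℂ \ {Re z ≤ 0}, and let B be a bounded operator satisfying B T = T⁻¹ B. Then B (Log T) = −(Log T) B, where Log T is defined by the holomorphic functional calculus with the principal branch of the logarithm. -/

import Mathlib

set_option linter.unusedSectionVars false
set_option linter.unnecessarySeqFocus false
set_option maxHeartbeats 2000000

open Metric Set Complex MeasureTheory

noncomputable section

section ScalarLemmas

-- ∮ log z / z = 0  on circles in the right half plane
lemma circleIntegral_log_inv (x : ℂ) (ρ : ℝ) (hρ : 0 ≤ ρ)
    (hre : ∀ z ∈ sphere x ρ, 0 < z.re) :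
    (∮ z in C(x, ρ), Complex.log z * z⁻¹) = 0 := by
  apply circleIntegral.integral_eq_zero_of_hasDerivWithinAt'
    (f := fun z => Complex.log z ^ 2 / 2)
  intro z hz
  rw [_root_.abs_of_nonneg hρ] at hz
  have h0 : 0 < z.re := hre z hz
  have hslit : z ∈ slitPlane := Or.inl h0
  have h := ((Complex.hasDerivAt_log hslit).pow 2).div_const 2
  have h' := h.hasDerivWithinAt (s := sphere x |ρ|)
  convert h' using 1
  · rfl
  · push_cast; ring

-- ∮ log z / z² = 0  on circles in the right half plane
lemma circleIntegral_log_inv_sq (x : ℂ) (ρ : ℝ) (hρ : 0 ≤ ρ)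
    (hre : ∀ z ∈ sphere x ρ, 0 < z.re) :
    (∮ z in C(x, ρ), Complex.log z * (z ^ 2)⁻¹) = 0 := by
  apply circleIntegral.integral_eq_zero_of_hasDerivWithinAt'
    (f := fun z => -((1 + Complex.log z) * z⁻¹))
  intro z hz
  rw [_root_.abs_of_nonneg hρ] at hz
  have h0 : 0 < z.re := hre z hz
  have hz0 : z ≠ 0 := by
    intro h; rw [h] at h0; simp at h0
  have hslit : z ∈ slitPlane := Or.inl h0
  have h1 : HasDerivAt (fun z : ℂ => 1 + Complex.log z) z⁻¹ z :=
    (Complex.hasDerivAt_log hslit).const_add 1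
  have h2 : HasDerivAt (fun y : ℂ => y⁻¹) (-(z ^ 2)⁻¹) z := hasDerivAt_inv hz0
  have h3 := (h1.mul h2).neg
  have heq : -(z⁻¹ * z⁻¹ + (1 + Complex.log z) * -(z ^ 2)⁻¹) = Complex.log z * (z ^ 2)⁻¹ := by
    field_simp
    ring
  rw [heq] at h3
  exact h3.hasDerivWithinAt

-- the inner scalar integral
lemma inner_scalar {x ρ ρ' : ℝ} (hρ' : 0 < ρ') (hρρ : ρ' < ρ)
    (hre : ∀ z ∈ closedBall ((x : ℂ)) ρ, 0 < z.re)
    (hinv_out : ∀ z ∈ sphere ((x : ℂ)) ρ, ‖z⁻¹ - x‖ = ρ)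
    {w : ℂ} (hw : w ∈ sphere ((x : ℂ)) ρ') (hwinv : w⁻¹ ∈ ball ((x : ℂ)) ρ) :
    (∮ z in C((x : ℂ), ρ), Complex.log z * (z ^ 2)⁻¹ * (z⁻¹ - w)⁻¹) =
      2 * (Real.pi : ℂ) * Complex.I * Complex.log w := by
  have hρ0 : 0 < ρ := lt_trans hρ' hρρ
  have hwcb : w ∈ closedBall ((x : ℂ)) ρ := by
    rw [mem_closedBall]
    rw [mem_sphere] at hw
    rw [hw]; exact hρρ.le
  have hwre : 0 < w.re := hre w hwcb
  have hw0 : w ≠ 0 := by intro h; rw [h] at hwre; simp at hwre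
  have hsre : ∀ z ∈ sphere ((x : ℂ)) ρ, 0 < z.re := fun z hz =>
    hre z (sphere_subset_closedBall hz)
  have hsz0 : ∀ z ∈ sphere ((x : ℂ)) ρ, z ≠ 0 := by
    intro z hz h; have := hsre z hz; rw [h] at this; simp at this
  -- pointwise rewrite
  have hpt : EqOn (fun z => Complex.log z * (z ^ 2)⁻¹ * (z⁻¹ - w)⁻¹)
      (fun z => (-w⁻¹) * (Complex.log z * (z ^ 2)⁻¹) -
        (w ^ 2)⁻¹ * ((z - w⁻¹)⁻¹ * (Complex.log z * (z ^ 2)⁻¹))) (sphere ((x:ℂ)) ρ) := by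
    intro z hz
    have hz0 := hsz0 z hz
    have hzw : z⁻¹ - w ≠ 0 := by
      intro h
      have : z⁻¹ = w := by linear_combination h
      have h1 := hinv_out z hz
      rw [this] at h1
      rw [mem_sphere, Complex.dist_eq] at hw
      rw [h1] at hw
      exact absurd hw (ne_of_gt hρρ)
    have hzwi : z - w⁻¹ ≠ 0 := by
      intro h
      have : z = w⁻¹ := by linear_combination h
      rw [mem_sphere, Complex.dist_eq] at hz
      rw [mem_ball, Complex.dist_eq] at hwinv
      rw [← this] at hwinv
      rw [hz] at hwinv
      exact absurd hwinv (lt_irrefl _)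
    have h4 : z * w - 1 ≠ 0 := by
      intro h
      have hzw1 : z * w = 1 := by linear_combination h
      have h5 : w⁻¹ = z := (eq_inv_of_mul_eq_one_left hzw1).symm
      apply hzwi
      rw [h5, sub_self]
    have hprod : (z⁻¹ - w) * (-w⁻¹ - (w ^ 2)⁻¹ * (z - w⁻¹)⁻¹) = 1 := by
      have hd : z - w⁻¹ = (z * w - 1) * w⁻¹ := by field_simp
      have he : z⁻¹ - w = -(z * w - 1) * z⁻¹ := by field_simp; ring
      rw [hd, he, mul_inv, inv_inv]
      field_simp
      ring
    have hkey : (z⁻¹ - w)⁻¹ = -w⁻¹ - (w ^ 2)⁻¹ * (z - w⁻¹)⁻¹ :=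
      inv_eq_of_mul_eq_one_right hprod
    simp only
    rw [hkey]
    ring
  rw [circleIntegral.integral_congr hρ0.le hpt]
  -- integrability of the two pieces
  have hlogc : ContinuousOn (fun z => Complex.log z * (z ^ 2)⁻¹) (closedBall ((x:ℂ)) ρ) := by
    intro z hz
    have h0 : 0 < z.re := hre z hz
    have hz0 : z ≠ 0 := by intro h; rw [h] at h0; simp at h0
    apply ContinuousWithinAt.mul
    · exact (_root_.continuousAt_clog (Or.inl h0)).continuousWithinAt
    · exact ((continuousAt_id.pow 2).inv₀ (pow_ne_zero _ hz0)).continuousWithinAt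
  have hint1 : CircleIntegrable (fun z => (-w⁻¹) * (Complex.log z * (z ^ 2)⁻¹)) ((x:ℂ)) ρ := by
    apply ContinuousOn.circleIntegrable hρ0.le
    exact continuousOn_const.mul (hlogc.mono sphere_subset_closedBall)
  have hint2 : CircleIntegrable
      (fun z => (w ^ 2)⁻¹ * ((z - w⁻¹)⁻¹ * (Complex.log z * (z ^ 2)⁻¹))) ((x:ℂ)) ρ := by
    apply ContinuousOn.circleIntegrable hρ0.le
    apply continuousOn_const.mul
    apply ContinuousOn.mul
    · apply ContinuousOn.inv₀ (continuousOn_id.sub continuousOn_const)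
      intro z hz h0
      simp only [Pi.sub_apply, id_eq] at h0
      have : z = w⁻¹ := by linear_combination h0
      rw [mem_sphere, Complex.dist_eq] at hz
      rw [mem_ball, Complex.dist_eq, ← this] at hwinv
      rw [hz] at hwinv
      exact absurd hwinv (lt_irrefl _)
    · exact hlogc.mono sphere_subset_closedBall
  rw [circleIntegral.integral_sub hint1 hint2,
    circleIntegral.integral_const_mul, circleIntegral.integral_const_mul,
    circleIntegral_log_inv_sq x ρ hρ0.le hsre, mul_zero]
  -- Cauchy integral formula for the second piece
  have hcauchy : (∮ z in C((x:ℂ), ρ), (z - w⁻¹)⁻¹ * (Complex.log z * (z ^ 2)⁻¹)) =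
      (2 * Real.pi * Complex.I : ℂ) * (Complex.log w⁻¹ * ((w⁻¹) ^ 2)⁻¹) := by
    have := Complex.circleIntegral_sub_inv_smul_of_differentiable_on_off_countable
      (s := ∅) countable_empty hwinv hlogc (f := fun z => Complex.log z * (z ^ 2)⁻¹) ?_
    · simpa only [smul_eq_mul] using this
    · intro z hz
      have h0 : 0 < z.re := hre z (ball_subset_closedBall hz.1)
      have hz0 : z ≠ 0 := by intro h; rw [h] at h0; simp at h0
      exact (Complex.differentiableAt_log (Or.inl h0)).mul
        ((differentiableAt_id.pow 2).inv (pow_ne_zero _ hz0))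
  rw [hcauchy]
  have hlog : Complex.log w⁻¹ = -Complex.log w :=
    Complex.log_inv w (slitPlane_arg_ne_pi (Or.inl hwre))
  rw [hlog]
  have : ((w⁻¹) ^ 2)⁻¹ = w ^ 2 := by
    rw [← inv_pow, inv_inv]
  rw [this]
  field_simp
  ring

lemma normSq_inv_circle {x ρ : ℝ} (hx2 : x ^ 2 = 1 + ρ ^ 2) (z : ℂ) :
    Complex.normSq (1 - (x : ℂ) * z) - ρ ^ 2 * Complex.normSq z =
      Complex.normSq (z - (x : ℂ)) - ρ ^ 2 := by
  simp only [Complex.normSq_apply, Complex.sub_re, Complex.sub_im, Complex.mul_re,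
    Complex.mul_im, Complex.one_re, Complex.one_im, Complex.ofReal_re, Complex.ofReal_im]
  linear_combination (z.re ^ 2 + z.im ^ 2 - 1) * hx2

lemma abs_inv_sphere {x ρ : ℝ} (hx2 : x ^ 2 = 1 + ρ ^ 2) {z : ℂ}
    (hz : ‖z - (x : ℂ)‖ = ρ) (hz0 : z ≠ 0) :
    ‖z⁻¹ - (x : ℂ)‖ = ρ := by
  have hρ0 : 0 ≤ ρ := hz ▸ norm_nonneg _
  have habs0 : ‖z‖ ≠ 0 := norm_ne_zero_iff.mpr hz0
  have hns : Complex.normSq (z - (x : ℂ)) = ρ ^ 2 := by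
    rw [← Complex.sq_norm, hz]
  have key := normSq_inv_circle hx2 z
  rw [hns] at key
  have hns2 : Complex.normSq (1 - (x : ℂ) * z) = (ρ * ‖z‖) ^ 2 := by
    have : (ρ * ‖z‖) ^ 2 = ρ ^ 2 * Complex.normSq z := by
      rw [mul_pow, Complex.sq_norm]
    rw [this]; linarith
  have habs1 : ‖1 - (x : ℂ) * z‖ = ρ * ‖z‖ := by
    rw [Complex.norm_def, hns2, Real.sqrt_sq (by positivity)]
  have h1 : z⁻¹ - (x : ℂ) = z⁻¹ * (1 - (x : ℂ) * z) := by field_simp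
  rw [h1, norm_mul, norm_inv, habs1]
  field_simp
lemma abs_inv_ball {x ρ ρ' : ℝ} (hx2 : x ^ 2 = 1 + ρ ^ 2) (hρρ : ρ' < ρ) {w : ℂ}
    (hw : ‖w - (x : ℂ)‖ = ρ') (hw0 : w ≠ 0) :
    ‖w⁻¹ - (x : ℂ)‖ < ρ := by
  have hρ'0 : 0 ≤ ρ' := hw ▸ norm_nonneg _
  have hρ0 : 0 < ρ := lt_of_le_of_lt hρ'0 hρρ
  have hnsw : 0 < Complex.normSq w := Complex.normSq_pos.mpr hw0
  have hns : Complex.normSq (w - (x : ℂ)) = ρ' ^ 2 := by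
    rw [← Complex.sq_norm, hw]
  have key := normSq_inv_circle hx2 w
  rw [hns] at key
  have hlt : Complex.normSq (1 - (x : ℂ) * w) < ρ ^ 2 * Complex.normSq w := by nlinarith
  apply lt_of_pow_lt_pow_left₀ 2 hρ0.le
  have h1 : w⁻¹ - (x : ℂ) = w⁻¹ * (1 - (x : ℂ) * w) := by field_simp
  rw [Complex.sq_norm, h1, Complex.normSq_mul, Complex.normSq_inv]
  rw [inv_mul_lt_iff₀ hnsw]
  nlinarith

end ScalarLemmas

section BanachAlg

variable {A : Type*} [NormedRing A] [NormedAlgebra ℂ A] [CompleteSpace A]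

lemma ring_inverse_eq {a b : A} (h1 : a * b = 1) (h2 : b * a = 1) :
    Ring.inverse a = b :=
  Ring.inverse_unit ⟨a, b, h1, h2⟩

lemma isUnit_smul_one_sub {T : A} {s : Set ℂ} (hs : spectrum ℂ T ⊆ s) {z : ℂ}
    (hz : z ∉ s) : IsUnit (z • (1 : A) - T) := by
  have h : z ∉ spectrum ℂ T := fun h => hz (hs h)
  rw [spectrum.notMem_iff] at h
  rwa [Algebra.algebraMap_eq_smul_one] at h

lemma resolvent_differentiableAt {T : A} {z : ℂ} (hz : IsUnit (z • (1 : A) - T)) :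
    DifferentiableAt ℂ (fun w : ℂ => Ring.inverse (w • (1 : A) - T)) z := by
  have h1 : DifferentiableAt ℂ (fun w : ℂ => w • (1 : A) - T) z :=
    (differentiableAt_id.smul_const (1 : A)).sub_const T
  exact (differentiableAt_inverse hz).comp z h1

lemma resolvent_continuousOn {T : A} {s : Set ℂ} (hs : ∀ z ∈ s, IsUnit (z • (1 : A) - T)) :
    ContinuousOn (fun w : ℂ => Ring.inverse (w • (1 : A) - T)) s :=
  fun z hz => ((resolvent_differentiableAt (hs z hz)).continuousAt).continuousWithinAt

lemma resolvent_norm_le {T : A} {c z : ℂ}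
    (h : 2 * ‖T - c • (1 : A)‖ + 1 ≤ ‖z - c‖) :
    ‖Ring.inverse (z • (1 : A) - T)‖ ≤ (‖(1 : A)‖ + 2) / ‖z - c‖ := by
  set u : ℂ := z - c with hu
  set M : A := T - c • (1 : A) with hM
  have hMn : (0:ℝ) ≤ ‖M‖ := norm_nonneg _
  have hu0 : (0:ℝ) < ‖u‖ := by nlinarith
  have huz : u ≠ 0 := by
    intro h0; rw [h0] at hu0; simp at hu0
  set t : A := u⁻¹ • M with ht
  have htn : ‖t‖ = ‖M‖ / ‖u‖ := by
    rw [ht, norm_smul, norm_inv, div_eq_inv_mul]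
  have ht2 : ‖t‖ ≤ 1/2 := by
    rw [htn, div_le_iff₀ hu0]; nlinarith
  have ht1 : ‖t‖ < 1 := lt_of_le_of_lt ht2 (by norm_num)
  have hunit : IsUnit ((1:A) - t) := isUnit_one_sub_of_norm_lt_one ht1
  have hkey : z • (1 : A) - T = u • ((1:A) - t) := by
    rw [smul_sub, ht, smul_smul, mul_inv_cancel₀ huz, one_smul, hM, hu, sub_smul]
    abel
  have hinv : Ring.inverse (z • (1 : A) - T) = u⁻¹ • Ring.inverse ((1:A) - t) := by
    rw [hkey]
    apply ring_inverse_eq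
    · rw [smul_mul_assoc, mul_smul_comm, smul_smul, mul_inv_cancel₀ huz, one_smul,
        Ring.mul_inverse_cancel _ hunit]
    · rw [smul_mul_assoc, mul_smul_comm, smul_smul, inv_mul_cancel₀ huz, one_smul,
        Ring.inverse_mul_cancel _ hunit]
  have hgeom : ‖Ring.inverse ((1:A) - t)‖ ≤ ‖(1:A)‖ - 1 + (1 - ‖t‖)⁻¹ := by
    rw [← geom_series_eq_inverse t ht1]
    exact tsum_geometric_le_of_norm_lt_one t ht1
  have hbound : ‖Ring.inverse ((1:A) - t)‖ ≤ ‖(1:A)‖ + 2 := by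
    have h3 : (1 - ‖t‖)⁻¹ ≤ 2 := by
      rw [inv_le_comm₀ (by linarith) (by norm_num)]; linarith
    linarith
  rw [hinv, norm_smul, norm_inv, div_eq_inv_mul]
  have := inv_pos.mpr hu0
  apply mul_le_mul_of_nonneg_left hbound this.le


-- pulling a continuous linear map through a circle integral
lemma circleIntegral_CLM_comm {E F : Type*} [NormedAddCommGroup E] [NormedSpace ℂ E]
    [CompleteSpace E] [NormedAddCommGroup F] [NormedSpace ℂ F] [CompleteSpace F]
    (L : E →L[ℂ] F) {f : ℂ → E} {c : ℂ} {R : ℝ} (hf : CircleIntegrable f c R) :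
    (∮ z in C(c, R), L (f z)) = L (∮ z in C(c, R), f z) := by
  have h := ContinuousLinearMap.intervalIntegral_comp_comm L hf.out
  unfold circleIntegral
  rw [← h]
  apply intervalIntegral.integral_congr
  intro θ _
  exact (L.map_smul _ _).symm

lemma riesz_projection_eq_one {T : A} {c : ℂ} {r : ℝ} (hr : 0 < r)
    (hs : spectrum ℂ T ⊆ ball c r) :
    (∮ z in C(c, r), Ring.inverse (z • (1 : A) - T)) =
      (2 * Real.pi * Complex.I : ℂ) • (1 : A) := by
  set f : ℂ → A := fun z => Ring.inverse (z • (1 : A) - T) with hf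
  have hU : ∀ z : ℂ, z ∉ ball c r → IsUnit (z • (1 : A) - T) := fun z hz =>
    isUnit_smul_one_sub hs hz
  have hD : ∀ z : ℂ, z ∉ ball c r → DifferentiableAt ℂ f z := fun z hz =>
    resolvent_differentiableAt (hU z hz)
  -- the integral does not depend on the radius
  have hconst : ∀ R : ℝ, r ≤ R → (∮ z in C(c, R), f z) = ∮ z in C(c, r), f z := by
    intro R hR
    apply Complex.circleIntegral_eq_of_differentiable_on_annulus_off_countable hr hR
      countable_empty
    · intro z hz
      exact ((hD z (fun hball => hz.2 hball)).continuousAt).continuousWithinAt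
    · intro z hz
      exact hD z (fun hball => hz.1.2 (ball_subset_closedBall hball))
  set M : A := T - c • (1 : A) with hM
  set K : ℝ := 2 * Real.pi * (‖M‖ * (‖(1 : A)‖ + 2)) with hK
  have hKpos : 0 ≤ K := by positivity
  -- bound for large R
  have hbnd : ∀ R : ℝ, r ≤ R → 2 * ‖M‖ + 1 ≤ R →
      ‖(∮ z in C(c, r), f z) - (2 * Real.pi * Complex.I : ℂ) • (1 : A)‖ ≤ K / R := by
    intro R hrR hMR
    have hRpos : (0:ℝ) < R := lt_of_lt_of_le hr hrR
    have h2πI : (∮ z in C(c, R), ((z - c)⁻¹ • (1 : A) : A)) =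
        (2 * Real.pi * Complex.I : ℂ) • (1 : A) := by
      rw [circleIntegral.integral_smul_const, circleIntegral.integral_sub_center_inv c
        (ne_of_gt hRpos)]
    have hsph : ∀ z ∈ sphere c R, ‖z - c‖ = R := by
      intro z hz; rwa [mem_sphere, Complex.dist_eq] at hz
    have hcf : CircleIntegrable f c R := by
      apply ContinuousOn.circleIntegrable hRpos.le
      apply resolvent_continuousOn
      intro z hz
      apply hU
      intro hball
      rw [mem_ball, Complex.dist_eq] at hball
      have := hsph z hz
      nlinarith
    have hcg : CircleIntegrable (fun z : ℂ => ((z - c)⁻¹ • (1 : A) : A)) c R := by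
      apply ContinuousOn.circleIntegrable hRpos.le
      apply ContinuousOn.smul _ continuousOn_const
      apply ContinuousOn.inv₀ ((continuousOn_id.sub continuousOn_const))
      intro z hz
      have := hsph z hz
      intro h0
      simp only [Pi.sub_apply, id_eq] at h0
      rw [h0] at this; simp at this; nlinarith
    rw [← hconst R hrR, ← h2πI, ← circleIntegral.integral_sub hcf hcg]
    have hptwise : ∀ z ∈ sphere c R, ‖f z - (z - c)⁻¹ • (1 : A)‖ ≤ K / (2 * Real.pi * R ^ 2) := by
      intro z hz
      have habs := hsph z hz
      have hzc : z - c ≠ 0 := by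
        intro h0; rw [h0] at habs; simp at habs; nlinarith
      have hu := hU z (by
        intro hball
        rw [mem_ball, Complex.dist_eq] at hball
        nlinarith)
      -- f z = (z-c)⁻¹ • (1 + M * f z)
      have hstep : (z - c) • f z = 1 + M * f z := by
        have h1 : ((z - c) • (1 : A)) * f z = (z • (1:A) - T) * f z + M * f z := by
          rw [← add_mul]; congr 1
          rw [hM, sub_smul]; abel
        rw [smul_mul_assoc, one_mul] at h1
        rw [h1, Ring.mul_inverse_cancel _ hu]
      have hfz : f z - (z - c)⁻¹ • (1 : A) = (z - c)⁻¹ • (M * f z) := by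
        have h2 : f z = (z - c)⁻¹ • (1 : A) + (z - c)⁻¹ • (M * f z) := by
          have h3 : (z - c)⁻¹ • ((z - c) • f z) = (z - c)⁻¹ • (1 + M * f z) := by rw [hstep]
          rw [smul_smul, inv_mul_cancel₀ hzc, one_smul, smul_add] at h3
          exact h3
        conv_lhs => rw [h2]
        abel
      rw [hfz, norm_smul, norm_inv, habs]
      have hfn : ‖f z‖ ≤ (‖(1 : A)‖ + 2) / R := by
        have := resolvent_norm_le (T := T) (c := c) (z := z) (by rw [habs]; exact hMR)
        rwa [habs] at this
      have hMfn : ‖M * f z‖ ≤ ‖M‖ * ((‖(1 : A)‖ + 2) / R) :=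
        le_trans (norm_mul_le _ _) (mul_le_mul_of_nonneg_left hfn (norm_nonneg _))
      calc R⁻¹ * ‖M * f z‖ ≤ R⁻¹ * (‖M‖ * ((‖(1 : A)‖ + 2) / R)) := by
            apply mul_le_mul_of_nonneg_left hMfn (by positivity)
        _ = K / (2 * Real.pi * R ^ 2) := by
            rw [hK]; field_simp
    have := circleIntegral.norm_integral_le_of_norm_le_const hRpos.le hptwise
    calc ‖∮ z in C(c, R), (f z - (z - c)⁻¹ • (1 : A))‖ ≤
        2 * Real.pi * R * (K / (2 * Real.pi * R ^ 2)) := this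
      _ = K / R := by field_simp
  -- conclude
  have hzero : ‖(∮ z in C(c, r), f z) - (2 * Real.pi * Complex.I : ℂ) • (1 : A)‖ ≤ 0 := by
    by_contra hpos
    push_neg at hpos
    set D := ‖(∮ z in C(c, r), f z) - (2 * Real.pi * Complex.I : ℂ) • (1 : A)‖ with hD
    set R : ℝ := max (max r (2 * ‖M‖ + 1)) ((K + 1) / D) with hR
    have h1 : r ≤ R := le_trans (le_max_left _ _) (le_max_left _ _)
    have h2 : 2 * ‖M‖ + 1 ≤ R := le_trans (le_max_right _ _) (le_max_left _ _)
    have h3 : (K + 1) / D ≤ R := le_max_right _ _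
    have hRpos : 0 < R := lt_of_lt_of_le hr h1
    have := hbnd R h1 h2
    have hKR : K / R ≤ K * D / (K + 1) := by
      rw [div_le_div_iff₀ hRpos (by positivity)]
      have := (div_le_iff₀ hpos).mp h3
      nlinarith
    have : D < D := by
      calc D ≤ K / R := this
        _ ≤ K * D / (K + 1) := hKR
        _ < D := by rw [div_lt_iff₀ (by positivity)]; nlinarith
    exact lt_irrefl _ this
  have := norm_le_zero_iff.mp hzero
  rwa [sub_eq_zero] at this


lemma circleIntegral_add {E : Type*} [NormedAddCommGroup E] [NormedSpace ℂ E]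
    {f g : ℂ → E} {c : ℂ} {R : ℝ} (hf : CircleIntegrable f c R) (hg : CircleIntegrable g c R) :
    (∮ z in C(c, R), (f z + g z)) = (∮ z in C(c, R), f z) + ∮ z in C(c, R), g z := by
  simp only [circleIntegral, smul_add]
  exact intervalIntegral.integral_add hf.out hg.out

-- first resolvent identity
lemma resolvent_sub {T : A} {z w : ℂ} (hz : IsUnit (z • (1 : A) - T))
    (hw : IsUnit (w • (1 : A) - T)) :
    Ring.inverse (z • (1 : A) - T) - Ring.inverse (w • (1 : A) - T) =
      (w - z) • (Ring.inverse (z • (1 : A) - T) * Ring.inverse (w • (1 : A) - T)) := by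
  set Rz := Ring.inverse (z • (1 : A) - T) with hRz
  set Rw := Ring.inverse (w • (1 : A) - T) with hRw
  have key : Rz * (((w - z) • (1 : A)) * Rw) = Rz - Rw := by
    have e1 : ((w - z) • (1 : A) : A) = (w • (1:A) - T) - (z • (1:A) - T) := by
      rw [sub_smul]; abel
    rw [e1, sub_mul, mul_sub, Ring.mul_inverse_cancel _ hw, mul_one, ← mul_assoc,
      Ring.inverse_mul_cancel _ hz, one_mul]
  rw [← key, smul_mul_assoc, one_mul, mul_smul_comm]

lemma resolvent_cauchy_rep {T : A} {c w : ℂ} {r : ℝ} (hr : 0 < r)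
    (hs : spectrum ℂ T ⊆ ball c r) (hw : w ∉ closedBall c r) :
    (∮ z in C(c, r), (w - z)⁻¹ • Ring.inverse (z • (1 : A) - T)) =
      (2 * Real.pi * Complex.I : ℂ) • Ring.inverse (w • (1 : A) - T) := by
  set Rw := Ring.inverse (w • (1 : A) - T) with hRw
  have hwu : IsUnit (w • (1 : A) - T) :=
    isUnit_smul_one_sub hs (fun hb => hw (ball_subset_closedBall hb))
  have hUsph : ∀ z ∈ sphere c r, IsUnit (z • (1 : A) - T) := by
    intro z hz
    apply isUnit_smul_one_sub hs
    rw [mem_sphere] at hz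
    simp [mem_ball, hz]
  have hwz : ∀ z ∈ sphere c r, w - z ≠ 0 := by
    intro z hz h0
    have : w = z := by linear_combination h0
    rw [this] at hw
    exact hw (sphere_subset_closedBall hz)
  -- pointwise identity
  have hpt : EqOn (fun z => (w - z)⁻¹ • Ring.inverse (z • (1 : A) - T))
      (fun z => (w - z)⁻¹ • Rw + Ring.inverse (z • (1 : A) - T) * Rw) (sphere c r) := by
    intro z hz
    have hsub := resolvent_sub (hUsph z hz) hwu
    have h1 : Ring.inverse (z • (1 : A) - T) =
        Rw + (w - z) • (Ring.inverse (z • (1 : A) - T) * Rw) := by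
      rw [← hsub]; abel
    simp only
    rw [h1, smul_add, smul_smul, inv_mul_cancel₀ (hwz z hz), one_smul]
    congr 1
    rw [← h1]
  rw [circleIntegral.integral_congr hr.le hpt]
  have hint1 : CircleIntegrable (fun z : ℂ => (w - z)⁻¹ • Rw) c r := by
    apply ContinuousOn.circleIntegrable hr.le
    apply ContinuousOn.smul _ continuousOn_const
    exact ContinuousOn.inv₀ (continuousOn_const.sub continuousOn_id) (fun z hz => hwz z hz)
  have hint2 : CircleIntegrable (fun z : ℂ => Ring.inverse (z • (1 : A) - T) * Rw) c r := by
    apply ContinuousOn.circleIntegrable hr.le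
    exact (resolvent_continuousOn hUsph).mul continuousOn_const
  rw [circleIntegral_add hint1 hint2]
  -- first integral vanishes
  have hzero : (∮ z in C(c, r), ((w - z)⁻¹ : ℂ)) = 0 := by
    apply Complex.circleIntegral_eq_zero_of_differentiable_on_off_countable hr.le countable_empty
    · apply ContinuousOn.inv₀ (continuousOn_const.sub continuousOn_id)
      intro z hz h0
      simp only [Pi.sub_apply, id_eq] at h0
      have : w = z := by linear_combination h0
      rw [this] at hw; exact hw hz
    · intro z hz
      apply DifferentiableAt.inv ((differentiableAt_const w).sub differentiableAt_id)
      intro h0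
      simp only [Pi.sub_apply, id_eq] at h0
      have : w = z := by linear_combination h0
      rw [this] at hw; exact hw (ball_subset_closedBall hz.1)
  have h1 : (∮ z in C(c, r), (w - z)⁻¹ • Rw) = 0 := by
    rw [circleIntegral.integral_smul_const, hzero, zero_smul]
  -- second integral
  have h2 : (∮ z in C(c, r), Ring.inverse (z • (1 : A) - T) * Rw) =
      (2 * Real.pi * Complex.I : ℂ) • Rw := by
    have hci : CircleIntegrable (fun z : ℂ => Ring.inverse (z • (1 : A) - T)) c r :=
      ContinuousOn.circleIntegrable hr.le (resolvent_continuousOn hUsph)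
    have := circleIntegral_CLM_comm ((ContinuousLinearMap.mul ℂ A).flip Rw) hci
    simp only [ContinuousLinearMap.flip_apply, ContinuousLinearMap.mul_apply'] at this
    rw [this, riesz_projection_eq_one hr hs, smul_mul_assoc, one_mul]
  rw [h1, h2, zero_add]

-- Fubini for circle integrals
lemma circleIntegral_swap {E : Type*} [NormedAddCommGroup E] [NormedSpace ℂ E] [CompleteSpace E]
    {c₁ c₂ : ℂ} {r₁ r₂ : ℝ} (h₁ : 0 ≤ r₁) (h₂ : 0 ≤ r₂) {f : ℂ → ℂ → E}
    (hf : ContinuousOn (fun p : ℂ × ℂ => f p.1 p.2) (sphere c₁ r₁ ×ˢ sphere c₂ r₂)) :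
    (∮ z in C(c₁, r₁), ∮ w in C(c₂, r₂), f z w) =
      ∮ w in C(c₂, r₂), ∮ z in C(c₁, r₁), f z w := by
  have h2π : (0:ℝ) ≤ 2 * Real.pi := by positivity
  have hG : Continuous (fun p : ℝ × ℝ =>
      (deriv (circleMap c₁ r₁) p.1 * deriv (circleMap c₂ r₂) p.2) •
        f (circleMap c₁ r₁ p.1) (circleMap c₂ r₂ p.2)) := by
    apply Continuous.smul
    · simp only [deriv_circleMap]
      fun_prop
    · have hcm : Continuous (fun p : ℝ × ℝ => (circleMap c₁ r₁ p.1, circleMap c₂ r₂ p.2)) := by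
        fun_prop
      exact hf.comp_continuous hcm
        (fun p => ⟨circleMap_mem_sphere _ h₁ _, circleMap_mem_sphere _ h₂ _⟩)
  simp only [circleIntegral]
  -- push the outer smul inside the inner integral
  have lhs_eq : ∀ θ : ℝ, (deriv (circleMap c₁ r₁) θ •
        ∫ φ in (0:ℝ)..2 * Real.pi, deriv (circleMap c₂ r₂) φ •
          f (circleMap c₁ r₁ θ) (circleMap c₂ r₂ φ)) =
      ∫ φ in (0:ℝ)..2 * Real.pi, (deriv (circleMap c₁ r₁) θ * deriv (circleMap c₂ r₂) φ) •
          f (circleMap c₁ r₁ θ) (circleMap c₂ r₂ φ) := by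
    intro θ
    rw [← intervalIntegral.integral_smul]
    congr 1; funext φ; rw [smul_smul]
  have rhs_eq : ∀ φ : ℝ, (deriv (circleMap c₂ r₂) φ •
        ∫ θ in (0:ℝ)..2 * Real.pi, deriv (circleMap c₁ r₁) θ •
          f (circleMap c₁ r₁ θ) (circleMap c₂ r₂ φ)) =
      ∫ θ in (0:ℝ)..2 * Real.pi, (deriv (circleMap c₁ r₁) θ * deriv (circleMap c₂ r₂) φ) •
          f (circleMap c₁ r₁ θ) (circleMap c₂ r₂ φ) := by
    intro φ
    rw [← intervalIntegral.integral_smul]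
    congr 1; funext θ; rw [smul_smul, mul_comm]
  simp only [lhs_eq, rhs_eq]
  -- now a genuine Fubini swap
  simp only [intervalIntegral.integral_of_le h2π]
  have hInt : Integrable (Function.uncurry (fun θ φ : ℝ =>
      (deriv (circleMap c₁ r₁) θ * deriv (circleMap c₂ r₂) φ) •
        f (circleMap c₁ r₁ θ) (circleMap c₂ r₂ φ)))
      ((volume.restrict (Ioc (0:ℝ) (2 * Real.pi))).prod
        (volume.restrict (Ioc (0:ℝ) (2 * Real.pi)))) := by
    rw [Measure.prod_restrict]
    have hIcc : IntegrableOn (Function.uncurry (fun θ φ : ℝ =>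
        (deriv (circleMap c₁ r₁) θ * deriv (circleMap c₂ r₂) φ) •
          f (circleMap c₁ r₁ θ) (circleMap c₂ r₂ φ)))
        (Icc (0:ℝ) (2 * Real.pi) ×ˢ Icc (0:ℝ) (2 * Real.pi)) (volume.prod volume) :=
      hG.continuousOn.integrableOn_compact (isCompact_Icc.prod isCompact_Icc)
    exact hIcc.mono_set (prod_mono Ioc_subset_Icc_self Ioc_subset_Icc_self)
  exact MeasureTheory.integral_integral_swap hInt


lemma two_pi_I_ne_zero' : (2 * (Real.pi : ℂ) * Complex.I) ≠ 0 :=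
  mul_ne_zero (mul_ne_zero two_ne_zero (by exact_mod_cast Real.pi_ne_zero)) I_ne_zero

/-- Moving the contour for integrals of the form `∮ φ(z) • (z - T)⁻¹`. -/
lemma circle_change {T : A} {c₁ c₂ : ℂ} {r₁ r₂ : ℝ} (h₁ : 0 < r₁)
    (hsub : closedBall c₁ r₁ ⊆ ball c₂ r₂) (hspec : spectrum ℂ T ⊆ ball c₁ r₁)
    {φ : ℂ → ℂ} (hφc : ContinuousOn φ (closedBall c₂ r₂))
    (hφd : ∀ z ∈ ball c₂ r₂, DifferentiableAt ℂ φ z) :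
    (∮ z in C(c₁, r₁), φ z • Ring.inverse (z • (1 : A) - T)) =
      ∮ w in C(c₂, r₂), φ w • Ring.inverse (w • (1 : A) - T) := by
  have h₂ : 0 < r₂ := by
    have := hsub (mem_closedBall_self h₁.le)
    rw [mem_ball] at this
    exact lt_of_le_of_lt dist_nonneg this
  set Res : ℂ → A := fun z => Ring.inverse (z • (1 : A) - T) with hRes
  have hπ := two_pi_I_ne_zero'
  have hUsph : ∀ z ∈ sphere c₁ r₁, IsUnit (z • (1 : A) - T) := by
    intro z hz
    apply isUnit_smul_one_sub hspec
    rw [mem_sphere] at hz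
    simp [mem_ball, hz]
  have hsph₁ : sphere c₁ r₁ ⊆ ball c₂ r₂ := sphere_subset_closedBall.trans hsub
  have hwout : ∀ w ∈ sphere c₂ r₂, w ∉ closedBall c₁ r₁ := by
    intro w hw hmem
    have := hsub hmem
    rw [mem_ball] at this
    rw [mem_sphere] at hw
    exact absurd this (by rw [hw]; exact lt_irrefl _)
  -- Cauchy representation of φ on the inner sphere
  have hrep : ∀ z ∈ sphere c₁ r₁,
      φ z = (2 * (Real.pi:ℂ) * Complex.I)⁻¹ * ∮ w in C(c₂, r₂), (w - z)⁻¹ * φ w := by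
    intro z hz
    have := Complex.circleIntegral_sub_inv_smul_of_differentiable_on_off_countable
      (s := ∅) countable_empty (hsph₁ hz) hφc (fun x hx => hφd x hx.1)
    simp only [smul_eq_mul] at this
    rw [this, inv_mul_cancel_left₀ hπ]
  -- continuity of the two-variable integrand
  have hpair : ContinuousOn (fun p : ℂ × ℂ => ((p.2 - p.1)⁻¹ * φ p.2) • Res p.1)
      (sphere c₁ r₁ ×ˢ sphere c₂ r₂) := by
    apply ContinuousOn.smul
    · apply ContinuousOn.mul
      · apply ContinuousOn.inv₀
        · exact (continuous_snd.sub continuous_fst).continuousOn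
        · rintro ⟨z, w⟩ ⟨hz, hw⟩
          intro h0
          have : w = z := by linear_combination h0
          rw [this] at hw
          exact hwout z hw (sphere_subset_closedBall hz)
      · exact hφc.comp continuous_snd.continuousOn
          (fun p hp => sphere_subset_closedBall (hp.2))
    · exact (resolvent_continuousOn hUsph).comp continuous_fst.continuousOn
        (fun p hp => hp.1)
  calc (∮ z in C(c₁, r₁), φ z • Res z)
      = ∮ z in C(c₁, r₁), (2 * (Real.pi:ℂ) * Complex.I)⁻¹ •
          ((∮ w in C(c₂, r₂), (w - z)⁻¹ * φ w) • Res z) := by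
        apply circleIntegral.integral_congr h₁.le
        intro z hz
        simp only
        rw [hrep z hz, mul_smul]
    _ = (2 * (Real.pi:ℂ) * Complex.I)⁻¹ •
          ∮ z in C(c₁, r₁), (∮ w in C(c₂, r₂), (w - z)⁻¹ * φ w) • Res z := by
        rw [circleIntegral.integral_smul]
    _ = (2 * (Real.pi:ℂ) * Complex.I)⁻¹ •
          ∮ z in C(c₁, r₁), ∮ w in C(c₂, r₂), ((w - z)⁻¹ * φ w) • Res z := by
        congr 1
        apply circleIntegral.integral_congr h₁.le
        intro z _
        simp only
        rw [← circleIntegral.integral_smul_const]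
    _ = (2 * (Real.pi:ℂ) * Complex.I)⁻¹ •
          ∮ w in C(c₂, r₂), ∮ z in C(c₁, r₁), ((w - z)⁻¹ * φ w) • Res z := by
        congr 1
        exact circleIntegral_swap h₁.le h₂.le hpair
    _ = (2 * (Real.pi:ℂ) * Complex.I)⁻¹ •
          ∮ w in C(c₂, r₂), (2 * (Real.pi:ℂ) * Complex.I) • (φ w • Res w) := by
        congr 1
        apply circleIntegral.integral_congr h₂.le
        intro w hw
        simp only
        have hinner : (∮ z in C(c₁, r₁), ((w - z)⁻¹ * φ w) • Res z) =
            φ w • ∮ z in C(c₁, r₁), (w - z)⁻¹ • Res z := by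
          rw [← circleIntegral.integral_smul]
          apply circleIntegral.integral_congr h₁.le
          intro z _
          simp only
          rw [smul_smul, mul_comm]
        rw [hinner, resolvent_cauchy_rep h₁ hspec (hwout w hw), smul_comm]
    _ = ∮ w in C(c₂, r₂), φ w • Res w := by
        rw [circleIntegral.integral_smul, inv_smul_smul₀ hπ]


-- commuting B through the resolvent
lemma B_swap {T Tinv B : A} (hBT : B * T = Tinv * B) {z : ℂ}
    (h1 : IsUnit (z • (1 : A) - T)) (h2 : IsUnit (z • (1 : A) - Tinv)) :
    B * Ring.inverse (z • (1 : A) - T) = Ring.inverse (z • (1 : A) - Tinv) * B := by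
  set R1 := Ring.inverse (z • (1 : A) - T)
  set R2 := Ring.inverse (z • (1 : A) - Tinv)
  have key : (z • (1 : A) - Tinv) * B = B * (z • (1 : A) - T) := by
    rw [mul_sub, sub_mul, hBT, mul_smul_comm, smul_mul_assoc, mul_one, one_mul]
  calc B * R1 = R2 * ((z • (1 : A) - Tinv) * (B * R1)) := by
        rw [← mul_assoc, ← mul_assoc, Ring.inverse_mul_cancel _ h2, one_mul]
    _ = R2 * (((z • (1 : A) - Tinv) * B) * R1) := by rw [mul_assoc]
    _ = R2 * ((B * (z • (1 : A) - T)) * R1) := by rw [key]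
    _ = R2 * (B * ((z • (1 : A) - T) * R1)) := by rw [mul_assoc]
    _ = R2 * B := by rw [Ring.mul_inverse_cancel _ h1, mul_one]

-- the resolvent of the inverse operator
lemma resolvent_inv_split {T Tinv : A} (hT : T * Tinv = 1) (hT' : Tinv * T = 1) {z : ℂ}
    (hz0 : z ≠ 0) (hz2 : IsUnit (z⁻¹ • (1 : A) - T)) :
    Ring.inverse (z • (1 : A) - Tinv) =
      z⁻¹ • (1 : A) - (z ^ 2)⁻¹ • Ring.inverse (z⁻¹ • (1 : A) - T) := by
  set R := Ring.inverse (z⁻¹ • (1 : A) - T) with hR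
  have hR1 : (z⁻¹ • (1 : A) - T) * R = 1 := Ring.mul_inverse_cancel _ hz2
  have hR2 : R * (z⁻¹ • (1 : A) - T) = 1 := Ring.inverse_mul_cancel _ hz2
  have hTR : T * R = z⁻¹ • R - 1 := by
    have h := hR1
    rw [sub_mul, smul_mul_assoc, one_mul] at h
    rw [← h]; abel
  have hRT : R * T = z⁻¹ • R - 1 := by
    have h := hR2
    rw [mul_sub, mul_smul_comm, mul_one] at h
    rw [← h]; abel
  have hVR : Tinv * R = z • R + z • Tinv := by
    have h1 : Tinv * (T * R) = R := by rw [← mul_assoc, hT', one_mul]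
    rw [hTR, mul_sub, mul_smul_comm, mul_one] at h1
    have h2 : z⁻¹ • (Tinv * R) = R + Tinv := sub_eq_iff_eq_add.mp h1
    have h3 : z • (z⁻¹ • (Tinv * R)) = z • (R + Tinv) := by rw [h2]
    rwa [smul_smul, mul_inv_cancel₀ hz0, one_smul, smul_add] at h3
  have hRV : R * Tinv = z • R + z • Tinv := by
    have h1 : R * T * Tinv = R := by rw [mul_assoc, hT, mul_one]
    rw [hRT, sub_mul, smul_mul_assoc, one_mul] at h1
    have h2 : z⁻¹ • (R * Tinv) = R + Tinv := sub_eq_iff_eq_add.mp h1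
    have h3 : z • (z⁻¹ • (R * Tinv)) = z • (R + Tinv) := by rw [h2]
    rwa [smul_smul, mul_inv_cancel₀ hz0, one_smul, smul_add] at h3
  have e2 : z * (z ^ 2)⁻¹ = z⁻¹ := by field_simp
  have e3 : (z ^ 2)⁻¹ * z = z⁻¹ := by field_simp
  apply ring_inverse_eq
  · simp only [mul_sub, sub_mul, smul_mul_assoc, mul_smul_comm, smul_smul, one_mul, mul_one]
    rw [hVR]
    match_scalars <;> field_simp <;> ring_nf
  · simp only [mul_sub, sub_mul, smul_mul_assoc, mul_smul_comm, smul_smul, one_mul, mul_one]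
    rw [hRV]
    match_scalars <;> field_simp <;> ring_nf


end BanachAlg

/-- If `T` is bounded invertible with spectrum in `ℂ \ {Re z ≤ 0}` and `B`
is a bounded operator with `B T = T⁻¹ B`, then `B (Log T) = −(Log T) B`, where `Log T`
is defined by the holomorphic functional calculus with the principal branch of log. -/
theorem stmt6 {H : Type*} [NormedAddCommGroup H] [NormedSpace ℂ H] [CompleteSpace H]
    (T Tinv LogT B : H →L[ℂ] H) (c : ℂ) (r : ℝ) (hr : 0 < r)
    (hT : T * Tinv = 1) (hT' : Tinv * T = 1)
    (hspec : spectrum ℂ T ⊆ Metric.ball c r)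
    (hspec' : spectrum ℂ Tinv ⊆ Metric.ball c r)
    (hright : Metric.closedBall c r ⊆ {z : ℂ | 0 < z.re})
    (hLog : LogT = (2 * (Real.pi : ℂ) * Complex.I)⁻¹ •
      circleIntegral (fun z : ℂ =>
        Complex.log z • Ring.inverse (z • (1 : H →L[ℂ] H) - T)) c r)
    (hBT : B * T = Tinv * B) :
    B * LogT = -(LogT * B) := by
  have hπ := two_pi_I_ne_zero'
  -- ## geometry setup
  have hsc0 : 0 < c.re - r := by
    have h1 : (c - (r : ℂ)) ∈ closedBall c r := by
      rw [mem_closedBall, Complex.dist_eq]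
      simp [_root_.abs_of_pos hr]
    have h2 := hright h1
    simp only [mem_setOf_eq, Complex.sub_re, Complex.ofReal_re] at h2
    linarith
  obtain ⟨s, hsdef⟩ : ∃ s : ℝ, s = c.re - r := ⟨_, rfl⟩
  have hsc : 0 < s := by rw [hsdef]; exact hsc0
  obtain ⟨m, hmdef⟩ : ∃ m : ℝ, m = ‖c‖ + r := ⟨_, rfl⟩
  have hm0 : 0 < m := by
    have := norm_nonneg c; rw [hmdef]; linarith
  obtain ⟨ρ, hρdef⟩ : ∃ ρ : ℝ, ρ = (m ^ 2 + 1) / s + s := ⟨_, rfl⟩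
  have hdivpos : 0 < (m ^ 2 + 1) / s := div_pos (by positivity) hsc
  have hρpos : 0 < ρ := by rw [hρdef]; linarith
  have hsρ : s * ρ = m ^ 2 + 1 + s ^ 2 := by
    rw [hρdef]; field_simp
  obtain ⟨x, hxdef⟩ : ∃ x : ℝ, x = Real.sqrt (1 + ρ ^ 2) := ⟨_, rfl⟩
  have hx2 : x ^ 2 = 1 + ρ ^ 2 := by rw [hxdef]; exact Real.sq_sqrt (by positivity)
  have hx0 : 0 < x := by rw [hxdef]; exact Real.sqrt_pos.mpr (by positivity)
  have hxρ : ρ < x := by nlinarith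
  obtain ⟨ρ', hρ'def⟩ : ∃ p : ℝ, p = ρ - s / 2 := ⟨_, rfl⟩
  have hsρ2 : s ≤ ρ := by rw [hρdef]; linarith
  have hρ'pos : 0 < ρ' := by rw [hρ'def]; linarith
  have hρ'ρ : ρ' < ρ := by rw [hρ'def]; linarith
  -- the closed ball is inside the small circle
  have hsub : closedBall c r ⊆ ball ((x : ℂ)) ρ' := by
    intro z hz
    rw [mem_closedBall, Complex.dist_eq] at hz
    rw [mem_ball, Complex.dist_eq]
    have hre : s ≤ z.re := by
      have h2 := Complex.abs_re_le_norm (z - c)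
      have h3 : (z - c).re = z.re - c.re := by simp [Complex.sub_re]
      rw [h3] at h2
      have h4 := abs_le.mp (le_trans h2 hz)
      rw [hsdef]
      linarith [h4.1]
    have habs : ‖z‖ ≤ m := by
      have h5 : z = c + (z - c) := by ring
      calc ‖z‖ = ‖c + (z - c)‖ := by rw [← h5]
        _ ≤ ‖c‖ + ‖z - c‖ := norm_add_le _ _
        _ ≤ m := by rw [hmdef]; linarith
    apply lt_of_pow_lt_pow_left₀ 2 hρ'pos.le
    rw [Complex.sq_norm]
    have hns : Complex.normSq (z - (x : ℂ)) = z.re ^ 2 - 2 * x * z.re + x ^ 2 + z.im ^ 2 := by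
      simp [Complex.normSq_apply, Complex.sub_re, Complex.sub_im, Complex.ofReal_re,
        Complex.ofReal_im]
      ring
    rw [hns]
    have hS : z.re ^ 2 + z.im ^ 2 ≤ m ^ 2 := by
      have h6 := Complex.sq_norm z
      rw [Complex.normSq_apply] at h6
      nlinarith [norm_nonneg z]
    have hA1 : 2 * x * s ≤ 2 * x * z.re :=
      mul_le_mul_of_nonneg_left hre (by positivity)
    have hA2 : s * ρ < s * x := mul_lt_mul_of_pos_left hxρ hsc
    rw [hρ'def]
    nlinarith
  -- right half plane facts
  have hx_re_pos : ∀ z ∈ closedBall ((x : ℂ)) ρ, 0 < z.re := by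
    intro z hz
    rw [mem_closedBall, Complex.dist_eq] at hz
    have h2 := Complex.abs_re_le_norm (z - (x : ℂ))
    have h3 : (z - (x : ℂ)).re = z.re - x := by
      simp [Complex.sub_re, Complex.ofReal_re]
    rw [h3] at h2
    have h4 := abs_le.mp (le_trans h2 hz)
    nlinarith [h4.1]
  have hx_ne_zero : ∀ z ∈ closedBall ((x : ℂ)) ρ, z ≠ 0 := by
    intro z hz h0
    have := hx_re_pos z hz
    rw [h0] at this; simp at this
  have hcb' : closedBall ((x : ℂ)) ρ' ⊆ closedBall ((x : ℂ)) ρ :=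
    closedBall_subset_closedBall hρ'ρ.le
  have hball' : ball ((x : ℂ)) ρ' ⊆ ball ((x : ℂ)) ρ := ball_subset_ball hρ'ρ.le
  -- spectra inclusions
  have hspecT' : spectrum ℂ T ⊆ ball ((x : ℂ)) ρ' :=
    hspec.trans (ball_subset_closedBall.trans hsub)
  have hspecV' : spectrum ℂ Tinv ⊆ ball ((x : ℂ)) ρ' :=
    hspec'.trans (ball_subset_closedBall.trans hsub)
  -- sphere inversion facts
  have hinv_sphere : ∀ z ∈ sphere ((x : ℂ)) ρ, ‖z⁻¹ - (x : ℂ)‖ = ρ := by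
    intro z hz
    have hz' : ‖z - (x : ℂ)‖ = ρ := by rwa [mem_sphere, Complex.dist_eq] at hz
    exact abs_inv_sphere hx2 hz' (hx_ne_zero z (sphere_subset_closedBall hz))
  have hinv_ball : ∀ w ∈ sphere ((x : ℂ)) ρ', w⁻¹ ∈ ball ((x : ℂ)) ρ := by
    intro w hw
    have hw' : ‖w - (x : ℂ)‖ = ρ' := by rwa [mem_sphere, Complex.dist_eq] at hw
    have hw0 : w ≠ 0 := hx_ne_zero w (hcb' (sphere_subset_closedBall hw))
    rw [mem_ball, Complex.dist_eq]
    exact abs_inv_ball hx2 hρ'ρ hw' hw0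
  -- units
  have hUT : ∀ z : ℂ, z ∉ ball ((x : ℂ)) ρ' → IsUnit (z • (1 : H →L[ℂ] H) - T) :=
    fun z hz => isUnit_smul_one_sub hspecT' hz
  have hUV : ∀ z : ℂ, z ∉ ball ((x : ℂ)) ρ' → IsUnit (z • (1 : H →L[ℂ] H) - Tinv) :=
    fun z hz => isUnit_smul_one_sub hspecV' hz
  -- log is holomorphic on the big disc
  have hφc : ContinuousOn Complex.log (closedBall ((x : ℂ)) ρ) := fun z hz =>
    (continuousAt_clog (Or.inl (hx_re_pos z hz))).continuousWithinAt
  have hφd : ∀ z ∈ ball ((x : ℂ)) ρ, DifferentiableAt ℂ Complex.log z := fun z hz =>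
    Complex.differentiableAt_log (Or.inl (hx_re_pos z (ball_subset_closedBall hz)))
  -- ## stage 1 : move both integrals to circles centered at x
  set g : ℂ → (H →L[ℂ] H) :=
    fun z => Complex.log z • Ring.inverse (z • (1 : H →L[ℂ] H) - T) with hgdef
  set gV : ℂ → (H →L[ℂ] H) :=
    fun z => Complex.log z • Ring.inverse (z • (1 : H →L[ℂ] H) - Tinv) with hgVdef
  have hIT : (∮ z in C(c, r), g z) = ∮ z in C((x : ℂ), ρ'), g z :=
    circle_change hr hsub hspec (hφc.mono hcb') (fun z hz => hφd z (hball' hz))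
  have hIV : (∮ z in C(c, r), gV z) = ∮ z in C((x : ℂ), ρ), gV z :=
    circle_change hr (hsub.trans (ball_subset_ball hρ'ρ.le)) hspec' hφc hφd
  set J := ∮ z in C((x : ℂ), ρ'), g z with hJdef
  -- ## stage 2 : the key identity ∮ gV over C(x,ρ) = -J
  have hsphρ : ∀ z ∈ sphere ((x : ℂ)) ρ, z ∉ ball ((x : ℂ)) ρ' := by
    intro z hz hmem
    rw [mem_sphere, Complex.dist_eq] at hz
    rw [mem_ball, Complex.dist_eq] at hmem
    nlinarith
  have hinv_not_cb : ∀ z ∈ sphere ((x : ℂ)) ρ, z⁻¹ ∉ closedBall ((x : ℂ)) ρ' := by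
    intro z hz hmem
    rw [mem_closedBall, Complex.dist_eq] at hmem
    have := hinv_sphere z hz
    nlinarith
  have hUinner : ∀ z ∈ sphere ((x : ℂ)) ρ, IsUnit (z⁻¹ • (1 : H →L[ℂ] H) - T) := by
    intro z hz
    apply hUT
    intro hmem
    exact hinv_not_cb z hz (ball_subset_closedBall hmem)
  have hz0sph : ∀ z ∈ sphere ((x : ℂ)) ρ, z ≠ 0 := fun z hz =>
    hx_ne_zero z (sphere_subset_closedBall hz)
  -- pointwise split of gV on the sphere
  have hptV : EqOn gV (fun z => (Complex.log z * z⁻¹) • (1 : H →L[ℂ] H) -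
      (Complex.log z * (z ^ 2)⁻¹) • Ring.inverse (z⁻¹ • (1 : H →L[ℂ] H) - T))
      (sphere ((x : ℂ)) ρ) := by
    intro z hz
    have h1 := resolvent_inv_split hT hT' (hz0sph z hz) (hUinner z hz)
    simp only [hgVdef]
    rw [h1, smul_sub, smul_smul, smul_smul]
  -- circle integrability of the two pieces
  have hRinvT : ContinuousOn (fun z : ℂ => Ring.inverse (z⁻¹ • (1 : H →L[ℂ] H) - T))
      (sphere ((x : ℂ)) ρ) := by
    have h1 : ContinuousOn (fun z : ℂ => z⁻¹) (sphere ((x : ℂ)) ρ) :=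
      ContinuousOn.inv₀ continuousOn_id (fun z hz => by
        simpa [id_eq] using hz0sph z hz)
    have h2 : ContinuousOn (fun w : ℂ => Ring.inverse (w • (1 : H →L[ℂ] H) - T))
        {w : ℂ | IsUnit (w • (1 : H →L[ℂ] H) - T)} :=
      resolvent_continuousOn (fun w hw => hw)
    exact h2.comp h1 (fun z hz => hUinner z hz)
  have hlogsq : ContinuousOn (fun z : ℂ => Complex.log z * (z ^ 2)⁻¹)
      (sphere ((x : ℂ)) ρ) := by
    apply ContinuousOn.mul (hφc.mono sphere_subset_closedBall)
    apply ContinuousOn.inv₀ (continuousOn_id.pow 2)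
    intro z hz
    simpa [id_eq] using pow_ne_zero 2 (hz0sph z hz)
  have hint1 : CircleIntegrable (fun z : ℂ => (Complex.log z * z⁻¹) • (1 : H →L[ℂ] H))
      ((x : ℂ)) ρ := by
    apply ContinuousOn.circleIntegrable hρpos.le
    apply ContinuousOn.fun_smul _ continuousOn_const
    apply ContinuousOn.mul (hφc.mono sphere_subset_closedBall)
    exact ContinuousOn.inv₀ continuousOn_id (fun z hz => by
      simpa [id_eq] using hz0sph z hz)
  have hint2 : CircleIntegrable (fun z : ℂ =>
      (Complex.log z * (z ^ 2)⁻¹) • Ring.inverse (z⁻¹ • (1 : H →L[ℂ] H) - T))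
      ((x : ℂ)) ρ := by
    apply ContinuousOn.circleIntegrable hρpos.le
    exact hlogsq.smul hRinvT
  -- first piece vanishes
  have hfirst : (∮ z in C((x : ℂ), ρ), (Complex.log z * z⁻¹) • (1 : H →L[ℂ] H)) = 0 := by
    rw [circleIntegral.integral_smul_const,
      circleIntegral_log_inv ((x : ℂ)) ρ hρpos.le
        (fun z hz => hx_re_pos z (sphere_subset_closedBall hz)), zero_smul]
  -- the second piece equals J via Fubini
  have hUρ'sph : ∀ w ∈ sphere ((x : ℂ)) ρ', IsUnit (w • (1 : H →L[ℂ] H) - T) := by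
    intro w hw
    apply hUT
    intro hmem
    rw [mem_sphere, Complex.dist_eq] at hw
    rw [mem_ball, Complex.dist_eq] at hmem
    nlinarith
  have hsecond : (∮ z in C((x : ℂ), ρ),
      (Complex.log z * (z ^ 2)⁻¹) • Ring.inverse (z⁻¹ • (1 : H →L[ℂ] H) - T)) = J := by
    have hrep : ∀ z ∈ sphere ((x : ℂ)) ρ, Ring.inverse (z⁻¹ • (1 : H →L[ℂ] H) - T) =
        (2 * (Real.pi : ℂ) * Complex.I)⁻¹ • ∮ w in C((x : ℂ), ρ'),
          (z⁻¹ - w)⁻¹ • Ring.inverse (w • (1 : H →L[ℂ] H) - T) := by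
      intro z hz
      have h1 := resolvent_cauchy_rep (T := T) (c := ((x : ℂ))) (w := z⁻¹) hρ'pos hspecT'
        (hinv_not_cb z hz)
      rw [h1, inv_smul_smul₀ hπ]
    have hpair : ContinuousOn (fun p : ℂ × ℂ =>
        ((Complex.log p.1 * (p.1 ^ 2)⁻¹ * (p.1⁻¹ - p.2)⁻¹) •
          Ring.inverse (p.2 • (1 : H →L[ℂ] H) - T)))
        (sphere ((x : ℂ)) ρ ×ˢ sphere ((x : ℂ)) ρ') := by
      apply ContinuousOn.fun_smul
      · apply ContinuousOn.mul
        · exact hlogsq.comp continuous_fst.continuousOn (fun p hp => hp.1)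
        · apply ContinuousOn.inv₀
          · apply ContinuousOn.sub
            · apply ContinuousOn.inv₀ continuous_fst.continuousOn
              intro p hp
              exact hz0sph p.1 hp.1
            · exact continuous_snd.continuousOn
          · rintro ⟨z, w⟩ ⟨hz, hw⟩ h0
            have h1 : z⁻¹ = w := by linear_combination h0
            have h2 := hinv_sphere z hz
            rw [h1] at h2
            rw [mem_sphere, Complex.dist_eq] at hw
            rw [h2] at hw
            exact absurd hw (ne_of_gt hρ'ρ)
      · exact (resolvent_continuousOn (fun w hw => hw)).comp continuous_snd.continuousOn
          (fun p hp => hUρ'sph p.2 hp.2)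
    calc (∮ z in C((x : ℂ), ρ),
        (Complex.log z * (z ^ 2)⁻¹) • Ring.inverse (z⁻¹ • (1 : H →L[ℂ] H) - T))
        = ∮ z in C((x : ℂ), ρ), (2 * (Real.pi : ℂ) * Complex.I)⁻¹ •
            ∮ w in C((x : ℂ), ρ'), ((Complex.log z * (z ^ 2)⁻¹ * (z⁻¹ - w)⁻¹) •
              Ring.inverse (w • (1 : H →L[ℂ] H) - T)) := by
          apply circleIntegral.integral_congr hρpos.le
          intro z hz
          simp only
          rw [hrep z hz, smul_comm (Complex.log z * ((z : ℂ) ^ 2)⁻¹)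
            ((2 * (Real.pi : ℂ) * Complex.I)⁻¹)]
          congr 1
          rw [← circleIntegral.integral_smul]
          apply circleIntegral.integral_congr hρ'pos.le
          intro w _
          simp only
          rw [smul_smul]
      _ = (2 * (Real.pi : ℂ) * Complex.I)⁻¹ •
            ∮ z in C((x : ℂ), ρ), ∮ w in C((x : ℂ), ρ'),
              ((Complex.log z * (z ^ 2)⁻¹ * (z⁻¹ - w)⁻¹) •
                Ring.inverse (w • (1 : H →L[ℂ] H) - T)) := by
          rw [circleIntegral.integral_smul]
      _ = (2 * (Real.pi : ℂ) * Complex.I)⁻¹ •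
            ∮ w in C((x : ℂ), ρ'), ∮ z in C((x : ℂ), ρ),
              ((Complex.log z * (z ^ 2)⁻¹ * (z⁻¹ - w)⁻¹) •
                Ring.inverse (w • (1 : H →L[ℂ] H) - T)) := by
          rw [circleIntegral_swap hρpos.le hρ'pos.le hpair]
      _ = (2 * (Real.pi : ℂ) * Complex.I)⁻¹ •
            ∮ w in C((x : ℂ), ρ'), (2 * (Real.pi : ℂ) * Complex.I * Complex.log w) •
              Ring.inverse (w • (1 : H →L[ℂ] H) - T) := by
          congr 1
          apply circleIntegral.integral_congr hρ'pos.le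
          intro w hw
          simp only
          rw [circleIntegral.integral_smul_const,
            inner_scalar hρ'pos hρ'ρ hx_re_pos hinv_sphere hw (hinv_ball w hw)]
      _ = J := by
          have h2 : (∮ w in C((x : ℂ), ρ'), (2 * (Real.pi : ℂ) * Complex.I * Complex.log w) •
              Ring.inverse (w • (1 : H →L[ℂ] H) - T)) =
              (2 * (Real.pi : ℂ) * Complex.I) • ∮ w in C((x : ℂ), ρ'), g w := by
            rw [← circleIntegral.integral_smul]
            apply circleIntegral.integral_congr hρ'pos.le
            intro w _
            simp only [hgdef]
            rw [mul_smul]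
          rw [h2, inv_smul_smul₀ hπ, hJdef]
  have hsplitV : (∮ z in C((x : ℂ), ρ), gV z) = -J := by
    rw [circleIntegral.integral_congr hρpos.le hptV,
      circleIntegral.integral_sub hint1 hint2, hfirst, hsecond, zero_sub]
  -- ## stage 3 : conclusion
  have hIzero : (∮ z in C(c, r), gV z) + (∮ z in C(c, r), g z) = 0 := by
    rw [hIT, hIV, hsplitV, hJdef]
    abel
  -- circle integrability over the original circle
  have hUc : ∀ z ∈ sphere c r, IsUnit (z • (1 : H →L[ℂ] H) - T) := by
    intro z hz
    apply isUnit_smul_one_sub hspec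
    rw [mem_sphere] at hz
    simp [mem_ball, hz]
  have hUc' : ∀ z ∈ sphere c r, IsUnit (z • (1 : H →L[ℂ] H) - Tinv) := by
    intro z hz
    apply isUnit_smul_one_sub hspec'
    rw [mem_sphere] at hz
    simp [mem_ball, hz]
  have hlogc : ContinuousOn Complex.log (sphere c r) := fun z hz =>
    (continuousAt_clog (Or.inl (hright (sphere_subset_closedBall hz)))).continuousWithinAt
  have hgci : CircleIntegrable g c r := by
    apply ContinuousOn.circleIntegrable hr.le
    exact hlogc.smul (resolvent_continuousOn hUc)
  have hgVci : CircleIntegrable gV c r := by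
    apply ContinuousOn.circleIntegrable hr.le
    exact hlogc.smul (resolvent_continuousOn hUc')
  -- commute B through the integral
  have hBmul : B * (∮ z in C(c, r), g z) = (∮ z in C(c, r), gV z) * B := by
    have h1 : B * (∮ z in C(c, r), g z) = ∮ z in C(c, r), B * g z := by
      have := circleIntegral_CLM_comm (ContinuousLinearMap.mul ℂ (H →L[ℂ] H) B) hgci
      simp only [ContinuousLinearMap.mul_apply'] at this
      rw [this]
    have h2 : (∮ z in C(c, r), gV z * B) = (∮ z in C(c, r), gV z) * B := by
      have := circleIntegral_CLM_comm
        ((ContinuousLinearMap.mul ℂ (H →L[ℂ] H)).flip B) hgVci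
      simp only [ContinuousLinearMap.flip_apply, ContinuousLinearMap.mul_apply'] at this
      rw [this]
    rw [h1, ← h2]
    apply circleIntegral.integral_congr hr.le
    intro z hz
    simp only [hgdef, hgVdef]
    rw [mul_smul_comm, smul_mul_assoc, B_swap hBT (hUc z hz) (hUc' z hz)]
  -- final computation
  rw [hLog, eq_neg_iff_add_eq_zero]
  rw [mul_smul_comm, smul_mul_assoc, ← smul_add, hBmul, ← add_mul, hIzero, zero_mul, smul_zero]

end
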